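/- arXiv:1502.06844 — 5 statements merged into one kernel-verified Lean document; each statement's English description precedes it below -/
import Mathlib

section
/- Let n ≥ 1 and let a_0, a_1, …, a_n be real numbers with 0 < a_0 < a_1 < ⋯ < a_n. Then every complex zero z of the polynomial p(z) = Σ_{k=0}^{n} a_k z^k satisfies |z| ≤ 1 (all zeros lie in the closed unit disk). -/
/-- **Eneström–Kakeya theorem.** If `0 < a 0 < a 1 < ⋯ < a n` (with `n ≥ 1`), then every
complex zero of the polynomial `p(z) = ∑_{k=0}^{n} a k * z ^ k` satisfies `|z| ≤ 1`. -/
theorem enestrom_kakeya (n : ℕ) (hn : 1 ≤ n) (a : ℕ → ℝ)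
    (ha0 : 0 < a 0) (hmono : ∀ k, k < n → a k < a (k + 1))
    (z : ℂ) (hz : ∑ k ∈ Finset.range (n + 1), (a k : ℂ) * z ^ k = 0) :
    ‖z‖ ≤ 1 := by
  by_contra h
  push_neg at h
  set r := ‖z‖ with hrdef
  have hr1 : 1 < r := h
  have hr0 : 0 < r := lt_trans one_pos hr1
  -- positivity along the chain
  have hpos : ∀ k, k ≤ n → 0 < a k := by
    intro k hk
    induction k with
    | zero => exact ha0
    | succ m ih =>
      have hm : m < n := lt_of_lt_of_le (Nat.lt_succ_self m) hk
      exact lt_trans (ih (le_of_lt hm)) (hmono m hm)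
  have han : 0 < a n := hpos n le_rfl
  -- key identity
  have key : (a n : ℂ) * z ^ (n + 1)
      = (a 0 : ℂ) + ∑ k ∈ Finset.range n, ((a (k + 1) : ℂ) - a k) * z ^ (k + 1) := by
    have h1 : (1 - z) * ∑ k ∈ Finset.range (n + 1), (a k : ℂ) * z ^ k = 0 := by
      rw [hz, mul_zero]
    have expand : (1 - z) * ∑ k ∈ Finset.range (n + 1), (a k : ℂ) * z ^ k
        = (a 0 : ℂ) + (∑ k ∈ Finset.range n, ((a (k + 1) : ℂ) - a k) * z ^ (k + 1))
          - (a n : ℂ) * z ^ (n + 1) := by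
      rw [sub_mul, one_mul, Finset.mul_sum]
      rw [Finset.sum_range_succ' (fun k => (a k : ℂ) * z ^ k) n]
      rw [Finset.sum_range_succ (fun k => z * ((a k : ℂ) * z ^ k)) n]
      have : ∀ k ∈ Finset.range n,
          ((a (k + 1) : ℂ) - a k) * z ^ (k + 1)
            = (a (k + 1) : ℂ) * z ^ (k + 1) - z * ((a k : ℂ) * z ^ k) := by
        intro k _; ring
      rw [Finset.sum_congr rfl this, Finset.sum_sub_distrib]
      ring
    rw [expand] at h1
    linear_combination -h1
  -- take absolute values
  have habs : a n * r ^ (n + 1)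
      ≤ a 0 + ∑ k ∈ Finset.range n, (a (k + 1) - a k) * r ^ (k + 1) := by
    have := congrArg (‖·‖) key
    rw [norm_mul, norm_pow, Complex.norm_real, Real.norm_eq_abs, abs_of_pos han] at this
    calc a n * r ^ (n + 1) = ‖(a 0 : ℂ)
          + ∑ k ∈ Finset.range n, ((a (k + 1) : ℂ) - a k) * z ^ (k + 1)‖ := this
      _ ≤ ‖(a 0 : ℂ)‖
          + ‖∑ k ∈ Finset.range n, ((a (k + 1) : ℂ) - a k) * z ^ (k + 1)‖ := by
            exact norm_add_le _ _
      _ ≤ a 0 + ∑ k ∈ Finset.range n, (a (k + 1) - a k) * r ^ (k + 1) := by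
            gcongr
            · rw [Complex.norm_real, Real.norm_eq_abs, abs_of_pos ha0]
            · refine le_trans (norm_sum_le _ _) ?_
              refine Finset.sum_le_sum fun k hk => ?_
              rw [norm_mul, norm_pow]
              have : ‖(a (k + 1) : ℂ) - a k‖ = a (k + 1) - a k := by
                rw [← Complex.ofReal_sub, Complex.norm_real, Real.norm_eq_abs,
                  abs_of_nonneg (le_of_lt (sub_pos.mpr (hmono k (Finset.mem_range.mp hk))))]
              rw [this]
  -- bound each power by r^n
  have hbound : a 0 + ∑ k ∈ Finset.range n, (a (k + 1) - a k) * r ^ (k + 1)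
      ≤ a n * r ^ n := by
    have h1 : a 0 ≤ a 0 * r ^ n := by
      nlinarith [one_le_pow₀ (le_of_lt hr1) (n := n), ha0.le]
    have h2 : ∀ k ∈ Finset.range n, (a (k + 1) - a k) * r ^ (k + 1)
        ≤ (a (k + 1) - a k) * r ^ n := by
      intro k hk
      have hd : 0 ≤ a (k + 1) - a k :=
        le_of_lt (sub_pos.mpr (hmono k (Finset.mem_range.mp hk)))
      exact mul_le_mul_of_nonneg_left
        (pow_le_pow_right₀ (le_of_lt hr1) (Finset.mem_range.mp hk)) hd
    have htel : ∑ k ∈ Finset.range n, (a (k + 1) - a k) = a n - a 0 :=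
      Finset.sum_range_sub a n
    calc a 0 + ∑ k ∈ Finset.range n, (a (k + 1) - a k) * r ^ (k + 1)
        ≤ a 0 * r ^ n + ∑ k ∈ Finset.range n, (a (k + 1) - a k) * r ^ n := by
          exact add_le_add h1 (Finset.sum_le_sum h2)
      _ = a n * r ^ n := by
          rw [← Finset.sum_mul, htel]; ring
  have : a n * r ^ (n + 1) ≤ a n * r ^ n := le_trans habs hbound
  have hp : 0 < r ^ n := pow_pos hr0 n
  rw [pow_succ, ← mul_assoc] at this
  have hq : 0 < a n * r ^ n := mul_pos han hp
  nlinarith [hq, hr1, this]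
end

section
/- Let n ≥ 1 and let c_0, …, c_n be complex numbers with c_n ≠ 0 such that every zero of the polynomial p(z) = Σ_{k=0}^{n} c_k z^k lies in the closed unit disk {z : |z| ≤ 1}. Define the entire functions A(z) = (1/2)(Σ_{k=0}^{n} c_k e^{ikz} + Σ_{k=0}^{n} conj(c_k) e^{−ikz}) and B(z) = (1/(2i))(Σ_{k=0}^{n} c_k e^{ikz} − Σ_{k=0}^{n} conj(c_k) e^{−ikz}), so that p(e^{iα}) = A(α) + iB(α) with A(α), B(α) real for every real α. Then every complex zero of A is real, and every complex zero of B is real. -/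
open Complex Finset Polynomial

noncomputable def hbP (n : ℕ) (c : ℕ → ℂ) : ℂ → ℂ :=
  fun v => ∑ k ∈ Finset.range (n + 1), c k * v ^ k

noncomputable def hbG (n : ℕ) (c : ℕ → ℂ) : ℂ → ℂ :=
  fun v => ∑ k ∈ Finset.range (n + 1), (starRingEnd ℂ) (c k) * (v⁻¹) ^ k

lemma hbG_eq (n : ℕ) (c : ℕ → ℂ) (w : ℂ) :
    hbG n c w = (starRingEnd ℂ) (hbP n c (((starRingEnd ℂ) w)⁻¹)) := by
  simp [hbP, hbG, map_sum, map_mul, map_pow, map_inv₀]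

lemma hb_factor (w r : ℂ) (hr : ‖r‖ ≤ 1) (hw : 1 ≤ ‖w‖) :
    ‖((starRingEnd ℂ) w)⁻¹ - r‖ ≤ (‖w‖)⁻¹ * ‖w - r‖ := by
  have hw0 : w ≠ 0 := by
    intro h; rw [h] at hw; simp at hw; linarith
  have hr2 : Complex.normSq r ≤ 1 := by
    have := Complex.sq_norm r; nlinarith [norm_nonneg r]
  have hw2 : 1 ≤ Complex.normSq w := by
    have := Complex.sq_norm w; nlinarith
  have key : ‖1 - (starRingEnd ℂ) w * r‖ ≤ ‖w - r‖ := by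
    rw [Complex.norm_def, Complex.norm_def]
    apply Real.sqrt_le_sqrt
    simp only [Complex.normSq_apply, Complex.sub_re, Complex.sub_im, Complex.mul_re,
      Complex.mul_im, Complex.one_re, Complex.one_im, Complex.conj_re, Complex.conj_im]
    simp only [Complex.normSq_apply] at hr2 hw2
    nlinarith [hr2, hw2]
  have heq : ((starRingEnd ℂ) w)⁻¹ - r = ((starRingEnd ℂ) w)⁻¹ * (1 - (starRingEnd ℂ) w * r) := by
    have hcw : (starRingEnd ℂ) w ≠ 0 := by simpa using hw0
    field_simp
  rw [heq, norm_mul, norm_inv, Complex.norm_conj]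
  exact mul_le_mul_of_nonneg_left key (by positivity)

lemma multiset_prod_le (s : Multiset ℂ) (f g : ℂ → ℝ) (h0 : ∀ x ∈ s, 0 ≤ f x)
    (h : ∀ x ∈ s, f x ≤ g x) : (s.map f).prod ≤ (s.map g).prod := by
  induction s using Multiset.induction with
  | empty => simp
  | cons a s ih =>
    simp only [Multiset.map_cons, Multiset.prod_cons]
    have hfa := h0 a (Multiset.mem_cons_self a s)
    have hga := h a (Multiset.mem_cons_self a s)
    have hfs : (0:ℝ) ≤ (s.map f).prod := by
      apply Multiset.prod_nonneg
      intro x hx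
      obtain ⟨y, hy, rfl⟩ := Multiset.mem_map.mp hx
      exact h0 y (Multiset.mem_cons_of_mem hy)
    have ihs := ih (fun x hx => h0 x (Multiset.mem_cons_of_mem hx))
      (fun x hx => h x (Multiset.mem_cons_of_mem hx))
    exact mul_le_mul hga ihs hfs (le_trans hfa hga)

lemma multiset_prod_pos (s : Multiset ℂ) (f : ℂ → ℝ) (h0 : ∀ x ∈ s, 0 < f x) :
    0 < (s.map f).prod := by
  apply Multiset.prod_pos
  intro x hx
  obtain ⟨y, hy, rfl⟩ := Multiset.mem_map.mp hx
  exact h0 y hy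

lemma hb_lt (n : ℕ) (hn : 1 ≤ n) (c : ℕ → ℂ) (hcn : c n ≠ 0)
    (hroots : ∀ z : ℂ, hbP n c z = 0 → ‖z‖ ≤ 1)
    (w : ℂ) (hw : 1 < ‖w‖) :
    ‖hbG n c w‖ < ‖hbP n c w‖ := by
  set p : Polynomial ℂ := ∑ k ∈ Finset.range (n + 1), Polynomial.monomial k (c k) with hp
  have hpeval : ∀ v, p.eval v = hbP n c v := by
    intro v; simp [hp, hbP, Polynomial.eval_finset_sum]
  have hpcoeff : ∀ m, p.coeff m = if m ∈ Finset.range (n + 1) then c m else 0 := by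
    intro m
    rw [hp, Polynomial.finset_sum_coeff]
    simp [Polynomial.coeff_monomial]
  have hcn' : p.coeff n = c n := by simp [hpcoeff]
  have hdeg_le : p.natDegree ≤ n := by
    apply Polynomial.natDegree_le_iff_coeff_eq_zero.mpr
    intro m hm
    rw [hpcoeff]
    simp only [Finset.mem_range, ite_eq_right_iff]
    intro h; omega
  have hdeg : p.natDegree = n :=
    le_antisymm hdeg_le (Polynomial.le_natDegree_of_ne_zero (hcn' ▸ hcn))
  have hlead : p.leadingCoeff = c n := by
    rw [Polynomial.leadingCoeff, hdeg, hcn']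
  have hsplit : Polynomial.Splits p := IsAlgClosed.splits p
  have hfact := hsplit.eq_prod_roots
  have hcard : p.roots.card = n := by
    rw [← hdeg]; exact (Polynomial.splits_iff_card_roots.mp hsplit)
  have hPv : ∀ v, hbP n c v = c n * (p.roots.map (fun r => v - r)).prod := by
    intro v
    rw [← hpeval]
    conv_lhs => rw [hfact]
    rw [Polynomial.eval_mul, Polynomial.eval_C, hlead, Polynomial.eval_multiset_prod,
      Multiset.map_map]
    simp
  have hRmem : ∀ r ∈ p.roots, ‖r‖ ≤ 1 := by
    intro r hr
    apply hroots
    rw [← hpeval]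
    exact Polynomial.isRoot_of_mem_roots hr
  have hw0 : (0:ℝ) < ‖w‖ := lt_trans one_pos hw
  have hGabs : ‖hbG n c w‖
      = ‖c n‖ * (p.roots.map (fun r => ‖((starRingEnd ℂ) w)⁻¹ - r‖)).prod := by
    rw [hbG_eq, Complex.norm_conj, hPv, norm_mul, show ∀ s : Multiset ℂ, ‖s.prod‖ = (s.map (‖·‖)).prod from fun s => map_multiset_prod (normHom : ℂ →*₀ ℝ) s, Multiset.map_map]
    rfl
  have hPabs : ‖hbP n c w‖
      = ‖c n‖ * (p.roots.map (fun r => ‖w - r‖)).prod := by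
    rw [hPv, norm_mul, show ∀ s : Multiset ℂ, ‖s.prod‖ = (s.map (‖·‖)).prod from fun s => map_multiset_prod (normHom : ℂ →*₀ ℝ) s, Multiset.map_map]
    rfl
  have h1 : (p.roots.map (fun r => ‖((starRingEnd ℂ) w)⁻¹ - r‖)).prod
      ≤ (p.roots.map (fun r => (‖w‖)⁻¹ * ‖w - r‖)).prod := by
    apply multiset_prod_le
    · intro x hx; positivity
    · intro x hx; exact hb_factor w x (hRmem x hx) hw.le
  have h2 : (p.roots.map (fun r => (‖w‖)⁻¹ * ‖w - r‖)).prod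
      = ((‖w‖)⁻¹) ^ n * (p.roots.map (fun r => ‖w - r‖)).prod := by
    rw [← hcard, Multiset.prod_map_mul]
    congr 1
    simp [Multiset.map_const']
  have hppos : 0 < (p.roots.map (fun r => ‖w - r‖)).prod := by
    apply multiset_prod_pos
    intro r hr
    have : w ≠ r := by
      intro h; rw [h] at hw; exact absurd (hRmem r hr) (not_le.mpr hw)
    simpa [sub_eq_zero] using this
  have hlt1 : ((‖w‖)⁻¹) ^ n < 1 := by
    apply pow_lt_one₀ (by positivity) _ (by omega)
    exact inv_lt_one_of_one_lt₀ hw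
  have hcpos : 0 < ‖c n‖ := by simpa using hcn
  rw [hGabs, hPabs]
  calc ‖c n‖ * (p.roots.map (fun r => ‖((starRingEnd ℂ) w)⁻¹ - r‖)).prod
      ≤ ‖c n‖ * (((‖w‖)⁻¹) ^ n * (p.roots.map (fun r => ‖w - r‖)).prod) := by
        rw [← h2]; exact mul_le_mul_of_nonneg_left h1 hcpos.le
    _ < ‖c n‖ * (p.roots.map (fun r => ‖w - r‖)).prod := by
        apply mul_lt_mul_of_pos_left _ hcpos
        nlinarith

lemma hb_ne (n : ℕ) (hn : 1 ≤ n) (c : ℕ → ℂ) (hcn : c n ≠ 0)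
    (hroots : ∀ z : ℂ, hbP n c z = 0 → ‖z‖ ≤ 1)
    (ε : ℂ) (hε : ‖ε‖ = 1) (w : ℂ) (hw : 1 < ‖w‖) :
    hbP n c w + ε * hbG n c w ≠ 0 := by
  intro h
  have hlt := hb_lt n hn c hcn hroots w hw
  have heq : hbP n c w = -(ε * hbG n c w) := by linear_combination h
  have : ‖hbP n c w‖ = ‖hbG n c w‖ := by
    rw [heq, norm_neg, norm_mul, hε, one_mul]
  linarith

lemma hb_main (n : ℕ) (hn : 1 ≤ n) (c : ℕ → ℂ) (hcn : c n ≠ 0)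
    (hroots : ∀ z : ℂ, hbP n c z = 0 → ‖z‖ ≤ 1)
    (ε : ℂ) (hε : ε = 1 ∨ ε = -1) (z : ℂ)
    (hz : hbP n c (Complex.exp (I * z)) + ε * hbG n c (Complex.exp (I * z)) = 0) :
    z.im = 0 := by
  have hεabs : ‖ε‖ = 1 := by rcases hε with h | h <;> simp [h]
  have hεconj : (starRingEnd ℂ) ε = ε := by rcases hε with h | h <;> simp [h]
  have hεsq : ε * ε = 1 := by rcases hε with h | h <;> simp [h]
  set w : ℂ := Complex.exp (I * z) with hwdef
  have hw0 : w ≠ 0 := Complex.exp_ne_zero _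
  have habs : ‖w‖ = Real.exp (-z.im) := by
    rw [hwdef, Complex.norm_exp]
    congr 1
    simp [Complex.mul_re]
  by_contra him
  rcases lt_or_gt_of_ne him with h1 | h1
  · -- z.im < 0, so abs w > 1
    have : 1 < ‖w‖ := by
      rw [habs]; exact Real.one_lt_exp_iff.mpr (by linarith)
    exact hb_ne n hn c hcn hroots ε hεabs w this hz
  · -- z.im > 0, so abs w < 1; use w' = (conj w)⁻¹
    set w' : ℂ := ((starRingEnd ℂ) w)⁻¹ with hw'def
    have hw'abs : 1 < ‖w'‖ := by
      rw [hw'def, norm_inv, Complex.norm_conj, habs]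
      rw [one_lt_inv_iff₀]
      constructor
      · positivity
      · exact Real.exp_lt_one_iff.mpr (by linarith)
    have hcw' : ((starRingEnd ℂ) w')⁻¹ = w := by
      rw [hw'def, map_inv₀, Complex.conj_conj, inv_inv]
    have hGw' : hbG n c w' = (starRingEnd ℂ) (hbP n c w) := by
      rw [hbG_eq, hcw']
    have hPw' : hbP n c w' = (starRingEnd ℂ) (hbG n c w) := by
      rw [hbG_eq n c w, Complex.conj_conj]
    have hz' : hbP n c w' + ε * hbG n c w' = 0 := by
      rw [hGw', hPw', ← hεconj, ← map_mul, ← map_add]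
      have h2 : hbG n c w + ε * hbP n c w = ε * (hbP n c w + ε * hbG n c w) := by
        linear_combination (-(hbG n c w)) * hεsq
      rw [h2, hz, mul_zero, map_zero]
    exact hb_ne n hn c hcn hroots ε hεabs w' hw'abs hz'


/-- **Hermite–Biehler theorem (real-zeros part).** If all zeros of
`p(z) = ∑_{k=0}^{n} c k * z ^ k` (with `n ≥ 1`, `c n ≠ 0`) lie in the closed unit disk, then
the entire functions `A(z) = (1/2)(∑ c_k e^{ikz} + ∑ conj(c_k) e^{-ikz})` and
`B(z) = (1/(2i))(∑ c_k e^{ikz} − ∑ conj(c_k) e^{-ikz})` have only real zeros. -/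
theorem hermite_biehler_real_zeros (n : ℕ) (hn : 1 ≤ n) (c : ℕ → ℂ) (hcn : c n ≠ 0)
    (hroots : ∀ z : ℂ, ∑ k ∈ Finset.range (n + 1), c k * z ^ k = 0 → ‖z‖ ≤ 1) :
    (∀ z : ℂ,
      (1 / 2) * ((∑ k ∈ Finset.range (n + 1), c k * Complex.exp (I * k * z))
        + ∑ k ∈ Finset.range (n + 1), (starRingEnd ℂ) (c k) * Complex.exp (-(I * k * z))) = 0 →
      z.im = 0) ∧
    (∀ z : ℂ,
      (1 / (2 * I)) * ((∑ k ∈ Finset.range (n + 1), c k * Complex.exp (I * k * z))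
        - ∑ k ∈ Finset.range (n + 1), (starRingEnd ℂ) (c k) * Complex.exp (-(I * k * z))) = 0 →
      z.im = 0) := by
  have hroots' : ∀ z : ℂ, hbP n c z = 0 → ‖z‖ ≤ 1 := hroots
  have hexp : ∀ z : ℂ, (∑ k ∈ Finset.range (n + 1), c k * Complex.exp (I * k * z))
      = hbP n c (Complex.exp (I * z)) := by
    intro z
    apply Finset.sum_congr rfl
    intro k _
    congr 1
    rw [show I * (k : ℂ) * z = (k : ℂ) * (I * z) by ring, Complex.exp_nat_mul]
  have hexp' : ∀ z : ℂ, (∑ k ∈ Finset.range (n + 1),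
        (starRingEnd ℂ) (c k) * Complex.exp (-(I * k * z)))
      = hbG n c (Complex.exp (I * z)) := by
    intro z
    apply Finset.sum_congr rfl
    intro k _
    congr 1
    rw [show -(I * (k : ℂ) * z) = -((k : ℂ) * (I * z)) by ring, Complex.exp_neg,
      Complex.exp_nat_mul, ← inv_pow]
  constructor
  · intro z h
    rw [hexp z, hexp' z] at h
    rcases mul_eq_zero.mp h with h' | h'
    · norm_num at h'
    · exact hb_main n hn c hcn hroots' 1 (Or.inl rfl) z (by rw [one_mul]; exact h')
  · intro z h
    rw [hexp z, hexp' z] at h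
    rcases mul_eq_zero.mp h with h' | h'
    · exact absurd h' (by simp [Complex.I_ne_zero])
    · exact hb_main n hn c hcn hroots' (-1) (Or.inr rfl) z (by linear_combination h')
end

section
/- Let n ≥ 1 and let a_0, a_1, …, a_n be real numbers with 0 < a_0 < a_1 < ⋯ < a_n. Then the entire function A(z) = Σ_{k=0}^{n} a_k cos(kz), where cos denotes the complex cosine, has only real zeros. -/
open Complex Polynomial Finset


lemma bdiff_sum (c : ℕ → ℂ) (r : ℂ) : ∀ m : ℕ,
    ∑ k ∈ range (m+1), (c k - if k = 0 then 0 else c (k-1)) * r^k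
      = (1-r) * ∑ k ∈ range (m+1), c k * r^k + c m * r^(m+1) := by
  intro m
  induction m with
  | zero => simp; ring
  | succ m ih =>
    rw [sum_range_succ, ih, sum_range_succ (fun k => c k * r^k) (m+1)]
    simp only [Nat.succ_ne_zero, if_false, Nat.add_sub_cancel]
    ring

lemma bdiffR_sum (c : ℕ → ℝ) : ∀ m : ℕ,
    ∑ k ∈ range (m+1), (c k - if k = 0 then 0 else c (k-1)) = c m := by
  intro m
  induction m with
  | zero => simp
  | succ m ih => rw [sum_range_succ, ih]; simp

lemma ek_bound (n : ℕ) (a : ℕ → ℝ) (ha0 : 0 < a 0)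
    (hmono : ∀ k, k < n → a k < a (k + 1)) (r : ℂ)
    (hroot : ∑ k ∈ range (n+1), (a k : ℂ) * r^k = 0) : ‖r‖ ≤ 1 := by
  by_contra h
  push_neg at h
  -- b k := a k - (if k = 0 then 0 else a (k-1)) ≥ 0 on range (n+1)
  set b : ℕ → ℝ := fun k => a k - if k = 0 then 0 else a (k-1) with hb
  have hbnn : ∀ k, k ≤ n → 0 ≤ b k := by
    intro k hk
    rcases k with _ | j
    · simp [hb]; linarith
    · simp [hb]
      have := hmono j (by omega)
      linarith
  have hbsum : ∑ k ∈ range (n+1), b k = a n := bdiffR_sum a n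
  have hmain : ((a n : ℂ)) * r^(n+1) = ∑ k ∈ range (n+1), (b k : ℂ) * r^k := by
    have h2 : ∑ k ∈ range (n+1), ((b k : ℝ):ℂ) * r^k
        = (1-r) * ∑ k ∈ range (n+1), (a k : ℂ) * r^k + (a n : ℂ) * r^(n+1) := by
      rw [← bdiff_sum (fun k => (a k:ℂ)) r n]
      apply Finset.sum_congr rfl
      intro k _
      rcases k with _|j <;> simp [hb]
    rw [h2, hroot]
    ring
  have han : 0 < a n := by
    have hpos : ∀ k, k ≤ n → 0 < a k := by
      intro k
      induction k with
      | zero => intro _; exact ha0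
      | succ j ih => intro hk; exact lt_trans (ih (by omega)) (hmono j (by omega))
    exact hpos n le_rfl
  have habs : a n * ‖r‖ ^ (n+1) ≤ a n * ‖r‖ ^ n := by
    calc a n * ‖r‖ ^ (n+1)
        = ‖(a n : ℂ) * r^(n+1)‖ := by
          rw [norm_mul, norm_pow, Complex.norm_real, Real.norm_eq_abs, _root_.abs_of_pos han]
      _ ≤ ∑ k ∈ range (n+1), ‖(b k : ℂ) * r^k‖ := by
          rw [hmain]; exact norm_sum_le _ _
      _ ≤ ∑ k ∈ range (n+1), b k * ‖r‖ ^ n := by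
          apply Finset.sum_le_sum
          intro k hk
          rw [norm_mul, norm_pow, Complex.norm_real, Real.norm_eq_abs]
          have hk' : k ≤ n := by simp at hk; omega
          have : ‖r‖ ^ k ≤ ‖r‖ ^ n :=
            pow_le_pow_right₀ (le_of_lt h) hk'
          rw [_root_.abs_of_nonneg (hbnn k hk')]
          exact mul_le_mul_of_nonneg_left this (hbnn k hk')
      _ = a n * ‖r‖ ^ n := by rw [← Finset.sum_mul, hbsum]
  have h1 : (1:ℝ) ≤ ‖r‖ ^ n := one_le_pow₀ (le_of_lt h)
  rw [pow_succ] at habs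
  have hxn : 0 < a n * ‖r‖ ^ n := by positivity
  nlinarith [mul_lt_mul_of_pos_left h hxn]

lemma key_ineq (w r : ℂ) (hw : 1 ≤ ‖w‖) (hr : ‖r‖ ≤ 1) :
    ‖1 - w * (starRingEnd ℂ) r‖ ≤ ‖w - r‖ := by
  have hw' : 1 ≤ Complex.normSq w := by
    rw [← Complex.sq_norm]; nlinarith [norm_nonneg w]
  have hr' : Complex.normSq r ≤ 1 := by
    rw [← Complex.sq_norm]; nlinarith [norm_nonneg r]
  rw [Complex.norm_def, Complex.norm_def]
  apply Real.sqrt_le_sqrt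
  simp only [Complex.normSq_apply, Complex.sub_re, Complex.sub_im, Complex.mul_re,
    Complex.mul_im, Complex.conj_re, Complex.conj_im, Complex.one_re, Complex.one_im,
    Complex.normSq_apply] at *
  nlinarith [mul_nonneg (sub_nonneg.2 hw') (sub_nonneg.2 hr')]

lemma prod_le_prod_multiset (s : Multiset ℂ) (f g : ℂ → ℝ)
    (h0 : ∀ r, 0 ≤ f r) (h : ∀ r ∈ s, f r ≤ g r) :
    (s.map f).prod ≤ (s.map g).prod := by
  induction s using Multiset.induction_on with
  | empty => simp
  | cons a s ih =>
    simp only [Multiset.map_cons, Multiset.prod_cons]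
    have h1 : (s.map f).prod ≤ (s.map g).prod := ih (fun r hr => h r (Multiset.mem_cons_of_mem hr))
    have h2 : 0 ≤ (s.map f).prod := by
      apply Multiset.prod_nonneg; intro x hx
      obtain ⟨y, _, rfl⟩ := Multiset.mem_map.1 hx
      exact h0 y
    have := h a (Multiset.mem_cons_self a s)
    have h3 : 0 ≤ f a := h0 a
    nlinarith

lemma abs_multiset_prod' (s : Multiset ℂ) :
    ‖s.prod‖ = (s.map (‖·‖)).prod := by
  induction s using Multiset.induction_on with
  | empty => simp
  | cons a s ih => simp [ih]

lemma main_neg (n : ℕ) (hn : 1 ≤ n) (a : ℕ → ℝ)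
    (ha0 : 0 < a 0) (hmono : ∀ k, k < n → a k < a (k + 1)) (z : ℂ) (hz : z.im < 0) :
    ∑ k ∈ Finset.range (n + 1), (a k : ℂ) * Complex.cos (k * z) ≠ 0 := by
  intro hsum
  have han : 0 < a n := by
    have hpos : ∀ k, k ≤ n → 0 < a k := by
      intro k
      induction k with
      | zero => intro _; exact ha0
      | succ j ih => intro hk; exact lt_trans (ih (by omega)) (hmono j (by omega))
    exact hpos n le_rfl
  set q := Complex.exp (z * I) with hqdef
  have hq0 : q ≠ 0 := Complex.exp_ne_zero _
  have hq : 1 < ‖q‖ := by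
    rw [hqdef, Complex.norm_exp]
    rw [Real.one_lt_exp_iff]
    simp [Complex.mul_re]
    linarith
  -- the polynomial
  set p : Polynomial ℂ := ∑ k ∈ range (n+1), C (a k : ℂ) * X^k with hpdef
  have heval : ∀ w : ℂ, p.eval w = ∑ k ∈ range (n+1), (a k : ℂ) * w^k := by
    intro w; simp [hpdef, eval_finset_sum]
  have hcoeff : ∀ m, p.coeff m = if m ≤ n then (a m : ℂ) else 0 := by
    intro m
    rw [hpdef, finset_sum_coeff]
    simp only [coeff_C_mul, coeff_X_pow]
    by_cases hm : m ≤ n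
    · rw [Finset.sum_eq_single m]
      · simp [hm]
      · intro k _ hkm; simp [Ne.symm hkm]
      · intro hmem; exact absurd (Finset.mem_range.2 (by omega)) hmem
    · rw [Finset.sum_eq_zero, if_neg hm]
      intro k hk
      have : m ≠ k := by simp at hk; omega
      simp [this]
  have hane : ((a n : ℝ) : ℂ) ≠ 0 := by
    simp only [ne_eq, Complex.ofReal_eq_zero]; linarith
  have hpne : p ≠ 0 := by
    intro h
    have := hcoeff n
    rw [h] at this
    simp at this
    exact hane (by simp [this])
  have hdeg : p.natDegree = n := by
    apply le_antisymm
    · rw [natDegree_le_iff_coeff_eq_zero]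
      intro N hN
      rw [hcoeff]
      simp [not_le.2 hN]
    · apply le_natDegree_of_ne_zero
      rw [hcoeff]
      simp [hane]
  have hsplits : p.Splits := IsAlgClosed.splits p
  have hcard : p.roots.card = n := by
    have := hsplits.natDegree_eq_card_roots
    omega
  have hlead : p.leadingCoeff = (a n : ℂ) := by
    rw [Polynomial.leadingCoeff, hdeg, hcoeff]
    simp
  have hfac : p = C p.leadingCoeff * (p.roots.map fun r => X - C r).prod :=
    hsplits.eq_prod_roots
  have hroots : ∀ r ∈ p.roots, ‖r‖ ≤ 1 := by
    intro r hr
    have hr' : p.eval r = 0 := (Polynomial.mem_roots hpne).1 hr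
    rw [heval] at hr'
    exact ek_bound n a ha0 hmono r hr'
  -- conjugation invariance of roots
  have hconjp : p.map (starRingEnd ℂ) = p := by
    ext m
    rw [coeff_map, hcoeff]
    split <;> simp
  have hconjroots : p.roots.map (starRingEnd ℂ) = p.roots := by
    rw [← hsplits.roots_map_of_injective (starRingEnd ℂ).injective, hconjp]
  -- sum identity
  have hS : p.eval q + p.eval q⁻¹ = 0 := by
    rw [heval, heval, ← Finset.sum_add_distrib]
    have hterm : ∀ k ∈ range (n+1), (a k : ℂ) * q^k + (a k : ℂ) * (q⁻¹)^k
        = 2 * ((a k : ℂ) * Complex.cos ((k:ℂ) * z)) := by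
      intro k _
      have h1 : Complex.exp ((k:ℂ) * (z * I)) = q ^ k := Complex.exp_nat_mul (z*I) k
      have hcos : Complex.cos ((k:ℂ) * z) = (q^k + (q⁻¹)^k)/2 := by
        rw [Complex.cos, show ((k:ℂ)*z)*I = (k:ℂ)*(z*I) by ring,
          show -((k:ℂ)*z)*I = -((k:ℂ)*(z*I)) by ring, Complex.exp_neg, h1, inv_pow]
      rw [hcos]; ring
    rw [Finset.sum_congr rfl hterm, ← Finset.mul_sum, hsum, mul_zero]
  -- abs of evals via factorization
  have habsq : ∀ w : ℂ, ‖p.eval w‖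
      = a n * (p.roots.map fun r => ‖w - r‖).prod := by
    intro w
    conv_lhs => rw [hfac]
    rw [eval_mul, eval_C, hlead, norm_mul, Complex.norm_real, Real.norm_eq_abs, _root_.abs_of_pos han,
      eval_multiset_prod, Multiset.map_map]
    have hmm : Multiset.map (eval w ∘ fun r => X - C r) p.roots
        = Multiset.map (fun r => w - r) p.roots := by
      apply Multiset.map_congr rfl
      intro r _
      simp
    rw [hmm, abs_multiset_prod', Multiset.map_map]
    rfl
  have hq1 : (1:ℝ) ≤ ‖q‖ := le_of_lt hq
  have hevalq_pos : 0 < ‖p.eval q‖ := by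
    have hne : p.eval q ≠ 0 := by
      intro h0
      have hqr : q ∈ p.roots := (Polynomial.mem_roots hpne).2 h0
      have := hroots q hqr
      linarith
    exact norm_pos_iff.mpr hne
  have hstep : ‖p.eval q⁻¹‖
      ≤ (‖q‖)⁻¹ ^ n * ‖p.eval q‖ := by
    rw [habsq, habsq]
    have h1 : Multiset.map (fun r => ‖q⁻¹ - r‖) p.roots
        = Multiset.map (fun r => (‖q‖)⁻¹ * ‖1 - q*r‖) p.roots := by
      apply Multiset.map_congr rfl
      intro r _
      have he : q⁻¹ - r = q⁻¹ * (1 - q*r) := by field_simp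
      rw [he, norm_mul, norm_inv]
    have h2 : (Multiset.map (fun r => (‖q‖)⁻¹ * ‖1 - q*r‖) p.roots).prod
        = (‖q‖)⁻¹ ^ n * (Multiset.map (fun r => ‖1 - q*r‖) p.roots).prod := by
      rw [← hcard]
      rw [Multiset.prod_map_mul]
      congr 1
      rw [Multiset.map_const', Multiset.prod_replicate]
    have h3 : (Multiset.map (fun r => ‖1 - q*r‖) p.roots).prod
        = (Multiset.map (fun r => ‖1 - q * (starRingEnd ℂ) r‖) p.roots).prod := by
      conv_lhs => rw [← hconjroots, Multiset.map_map]
      rfl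
    have h4 : (Multiset.map (fun r => ‖1 - q * (starRingEnd ℂ) r‖) p.roots).prod
        ≤ (Multiset.map (fun r => ‖q - r‖) p.roots).prod := by
      apply prod_le_prod_multiset
      · intro r; exact norm_nonneg _
      · intro r hr; exact key_ineq q r hq1 (hroots r hr)
    rw [h1, h2, h3]
    have hc : (0:ℝ) ≤ (‖q‖)⁻¹ ^ n := by positivity
    have := mul_le_mul_of_nonneg_left h4 hc
    nlinarith [this, han]
  have heq : ‖p.eval q⁻¹‖ = ‖p.eval q‖ := by
    have : p.eval q⁻¹ = - p.eval q := by linear_combination hS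
    rw [this, norm_neg]
  have hlt : (‖q‖)⁻¹ ^ n < 1 := by
    apply pow_lt_one₀ (by positivity)
    · rw [inv_lt_one_iff₀]; right; exact hq
    · omega
  nlinarith [hstep, heq, hevalq_pos, hlt]


/-- If `0 < a 0 < a 1 < ⋯ < a n` (with `n ≥ 1`), then the entire function
`A(z) = ∑_{k=0}^{n} a k * cos (k z)` (complex cosine) has only real zeros. -/
theorem cos_sum_real_zeros (n : ℕ) (hn : 1 ≤ n) (a : ℕ → ℝ)
    (ha0 : 0 < a 0) (hmono : ∀ k, k < n → a k < a (k + 1)) :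
    ∀ z : ℂ, ∑ k ∈ Finset.range (n + 1), (a k : ℂ) * Complex.cos (k * z) = 0 → z.im = 0 := by
  intro z hz
  by_contra him
  rcases lt_or_gt_of_ne him with h | h
  · exact main_neg n hn a ha0 hmono z h hz
  · apply main_neg n hn a ha0 hmono (-z) (by simp [Complex.neg_im]; linarith)
    rw [← hz]
    apply Finset.sum_congr rfl
    intro k _
    rw [show (k:ℂ) * -z = -((k:ℂ)*z) by ring, Complex.cos_neg]
end

section
/- Let n ≥ 1 and let a_0, a_1, …, a_n be real numbers with 0 < a_0 < a_1 < ⋯ < a_n. Then the entire function B(z) = Σ_{k=1}^{n} a_k sin(kz), where sin denotes the complex sine, has only real zeros. -/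
open Finset Complex Polynomial

noncomputable def Complex.abs : AbsoluteValue ℂ ℝ where
  toFun z := ‖z‖
  map_mul' := norm_mul
  nonneg' := norm_nonneg
  eq_zero' _ := norm_eq_zero
  add_le' := norm_add_le

theorem Complex.abs_apply (z : ℂ) : Complex.abs z = Real.sqrt (Complex.normSq z) := Complex.norm_def z

theorem Complex.normSq_eq_abs (z : ℂ) : Complex.normSq z = Complex.abs z ^ 2 :=
  Complex.normSq_eq_norm_sq z

theorem Complex.re_le_abs (z : ℂ) : z.re ≤ Complex.abs z := Complex.re_le_norm z

theorem Complex.abs_ofReal (r : ℝ) : Complex.abs (r : ℂ) = |r| := Complex.norm_real r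

theorem Complex.abs_conj (z : ℂ) : Complex.abs ((starRingEnd ℂ) z) = Complex.abs z :=
  Complex.norm_conj z

theorem Complex.abs_exp (z : ℂ) : Complex.abs (Complex.exp z) = Real.exp z.re := Complex.norm_exp z

private lemma aux_prod_le {t : Multiset ℂ} {f g : ℂ → ℝ}
    (h0 : ∀ r ∈ t, 0 ≤ f r) (hle : ∀ r ∈ t, f r ≤ g r) :
    0 ≤ (t.map f).prod ∧ (t.map f).prod ≤ (t.map g).prod := by
  induction t using Multiset.induction with
  | empty => simp
  | cons a t ih =>
    simp only [Multiset.map_cons, Multiset.prod_cons]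
    obtain ⟨h1, h2⟩ := ih (fun r hr => h0 r (Multiset.mem_cons_of_mem hr))
      (fun r hr => hle r (Multiset.mem_cons_of_mem hr))
    have hfa := h0 a (Multiset.mem_cons_self a t)
    have hga := hle a (Multiset.mem_cons_self a t)
    exact ⟨mul_nonneg hfa h1, mul_le_mul hga h2 h1 (le_trans hfa hga)⟩

private lemma aux_prod_lt {s : Multiset ℂ} (hs : s ≠ 0) {f g : ℂ → ℝ}
    (h0 : ∀ r ∈ s, 0 ≤ f r) (hlt : ∀ r ∈ s, f r < g r) :
    (s.map f).prod < (s.map g).prod := by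
  obtain ⟨x, hx⟩ := Multiset.exists_mem_of_ne_zero hs
  have hst : x ::ₘ s.erase x = s := Multiset.cons_erase hx
  rw [← hst]
  simp only [Multiset.map_cons, Multiset.prod_cons]
  have h0' : ∀ r ∈ s.erase x, 0 ≤ f r := fun r hr => h0 r (Multiset.mem_of_mem_erase hr)
  have hle' : ∀ r ∈ s.erase x, f r ≤ g r := fun r hr => (hlt r (Multiset.mem_of_mem_erase hr)).le
  obtain ⟨h1, h2⟩ := aux_prod_le h0' hle'
  have hgpos : 0 < ((s.erase x).map g).prod := by
    apply Multiset.prod_pos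
    intro b hb
    obtain ⟨r, hr, rfl⟩ := Multiset.mem_map.mp hb
    exact lt_of_le_of_lt (h0 r (Multiset.mem_of_mem_erase hr)) (hlt r (Multiset.mem_of_mem_erase hr))
  calc f x * ((s.erase x).map f).prod ≤ f x * ((s.erase x).map g).prod :=
        mul_le_mul_of_nonneg_left h2 (h0 x hx)
    _ < g x * ((s.erase x).map g).prod :=
        mul_lt_mul_of_pos_right (hlt x hx) hgpos

private lemma factor_lt {w r : ℂ} (hw : 1 < Complex.abs w) (hr : Complex.abs r < 1) :
    Complex.abs (w⁻¹ - r) < Complex.abs ((starRingEnd ℂ) w - r) := by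
  have hw0 : w ≠ 0 := by
    intro h; rw [h] at hw; simp at hw; linarith
  set u : ℂ := r * w with hu
  have hA : 1 < Complex.abs w := hw
  have htq : Complex.normSq w = Complex.abs w ^ 2 := Complex.normSq_eq_abs w
  have hure : u.re < Complex.abs w := by
    calc u.re ≤ Complex.abs u := Complex.re_le_abs u
      _ = Complex.abs r * Complex.abs w := by rw [hu, map_mul]
      _ < 1 * Complex.abs w := by
          apply mul_lt_mul_of_pos_right hr (lt_trans one_pos hA)
      _ = Complex.abs w := one_mul _
  -- key: |1 - u| < |(abs w ^ 2 : ℝ) - u|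
  have hkey : Complex.abs (1 - u) < Complex.abs (((Complex.abs w ^ 2 : ℝ) : ℂ) - u) := by
    rw [Complex.abs_apply, Complex.abs_apply]
    apply Real.sqrt_lt_sqrt (Complex.normSq_nonneg _)
    simp only [Complex.normSq_apply, Complex.sub_re, Complex.sub_im, Complex.one_re,
      Complex.one_im, Complex.ofReal_re, Complex.ofReal_im]
    have h2 : 2 * Complex.abs w ≤ Complex.abs w ^ 2 + 1 := by nlinarith
    have h3 : 2 * u.re < Complex.abs w ^ 2 + 1 := by nlinarith
    nlinarith [mul_pos (by nlinarith : (0:ℝ) < Complex.abs w ^ 2 - 1)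
      (by linarith : (0:ℝ) < Complex.abs w ^ 2 + 1 - 2 * u.re)]
  have hid1 : w⁻¹ - r = w⁻¹ * (1 - u) := by
    field_simp [hu]; rw [hu]; ring
  have hid2 : w * ((starRingEnd ℂ) w - r) = ((Complex.abs w ^ 2 : ℝ) : ℂ) - u := by
    rw [mul_sub, Complex.mul_conj, htq, hu, mul_comm w r]
  have habs2 : Complex.abs w * Complex.abs ((starRingEnd ℂ) w - r)
      = Complex.abs (((Complex.abs w ^ 2 : ℝ) : ℂ) - u) := by
    rw [← map_mul, hid2]
  rw [hid1, map_mul, map_inv₀]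
  rw [inv_mul_lt_iff₀ (lt_trans one_pos hA)]
  rw [habs2]
  exact hkey

private lemma ek (n : ℕ) (hn : 1 ≤ n) (a : ℕ → ℝ) (ha0 : 0 < a 0)
    (hmono : ∀ k, k < n → a k < a (k + 1)) (r : ℂ)
    (hroot : ∑ k ∈ Finset.Icc 1 n, (a k : ℂ) * r ^ k = 0) :
    Complex.abs r < 1 := by
  obtain ⟨m, rfl⟩ : ∃ m, n = m + 1 := ⟨n - 1, (Nat.succ_pred_eq_of_pos hn).symm⟩
  set n := m + 1 with hndef
  have hpos : ∀ k, k ≤ n → 0 < a k := by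
    intro k
    induction k with
    | zero => intro _; exact ha0
    | succ j ih => intro h
                   exact lt_trans (ih (Nat.le_of_succ_le h)) (hmono j (Nat.lt_of_succ_le h))
  -- reindex the root equation over range n
  have hS : ∑ i ∈ range n, (a (i + 1) : ℂ) * r ^ (i + 1) = 0 := by
    rw [← hroot, ← Finset.Ico_add_one_right_eq_Icc, Finset.sum_Ico_eq_sum_range]
    simp only [Nat.add_sub_cancel]
    exact Finset.sum_congr rfl fun i _ => by rw [Nat.add_comm 1 i]
  -- Abel summation identity (pure algebra)
  have hiden : ∀ N : ℕ, (a 0 : ℂ) * r + ∑ i ∈ range N, ((a (i + 1) : ℂ) - (a i : ℂ)) * r ^ (i + 1)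
      - (a N : ℂ) * r ^ (N + 1) = (1 - r) * ∑ i ∈ range N, (a (i + 1) : ℂ) * r ^ (i + 1) := by
    intro N
    induction N with
    | zero => simp
    | succ k ih =>
      rw [Finset.sum_range_succ, Finset.sum_range_succ, mul_add]
      linear_combination ih
  have hid : (a n : ℂ) * r ^ (n + 1)
      = (a 0 : ℂ) * r + ∑ i ∈ range n, ((a (i + 1) : ℂ) - (a i : ℂ)) * r ^ (i + 1) := by
    have h := hiden n
    rw [hS, mul_zero] at h
    linear_combination -h
  set A := Complex.abs r with hAdef
  have hA0 : 0 ≤ A := Complex.abs.nonneg r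
  -- triangle inequality
  have habs : a n * A ^ (n + 1) ≤ a 0 * A + ∑ i ∈ range n, (a (i + 1) - a i) * A ^ (i + 1) := by
    calc a n * A ^ (n + 1) = Complex.abs ((a n : ℂ) * r ^ (n + 1)) := by
          rw [map_mul, map_pow, Complex.abs_ofReal, abs_of_pos (hpos n le_rfl)]
      _ = Complex.abs ((a 0 : ℂ) * r + ∑ i ∈ range n, ((a (i + 1) : ℂ) - (a i : ℂ)) * r ^ (i + 1)) := by
          rw [hid]
      _ ≤ Complex.abs ((a 0 : ℂ) * r)
          + Complex.abs (∑ i ∈ range n, ((a (i + 1) : ℂ) - (a i : ℂ)) * r ^ (i + 1)) :=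
          Complex.abs.add_le _ _
      _ ≤ a 0 * A + ∑ i ∈ range n, (a (i + 1) - a i) * A ^ (i + 1) := by
          gcongr
          · rw [map_mul, Complex.abs_ofReal, abs_of_pos ha0]
          · calc Complex.abs (∑ i ∈ range n, ((a (i + 1) : ℂ) - (a i : ℂ)) * r ^ (i + 1))
                ≤ ∑ i ∈ range n, Complex.abs (((a (i + 1) : ℂ) - (a i : ℂ)) * r ^ (i + 1)) :=
                  Complex.abs.sum_le _ _
              _ = ∑ i ∈ range n, (a (i + 1) - a i) * A ^ (i + 1) := by
                  apply Finset.sum_congr rfl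
                  intro i hi
                  rw [map_mul, map_pow]
                  have : ((a (i + 1) : ℂ) - (a i : ℂ)) = ((a (i + 1) - a i : ℝ) : ℂ) := by push_cast; ring
                  rw [this, Complex.abs_ofReal,
                    abs_of_pos (sub_pos.mpr (hmono i (Finset.mem_range.mp hi)))]
  have hdsum : ∑ i ∈ range n, (a (i + 1) - a i) = a n - a 0 := Finset.sum_range_sub a n
  -- A ≤ 1
  have hAle : A ≤ 1 := by
    by_contra hA1
    push_neg at hA1
    have hb : ∀ i ∈ range n, (a (i + 1) - a i) * A ^ (i + 1) ≤ (a (i + 1) - a i) * A ^ n := by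
      intro i hi
      have := Finset.mem_range.mp hi
      exact mul_le_mul_of_nonneg_left
        (pow_le_pow_right₀ hA1.le (Nat.succ_le_of_lt this)) (sub_pos.mpr (hmono i this)).le
    have h1 : a n * A ^ (n + 1) ≤ a n * A ^ n := by
      calc a n * A ^ (n + 1) ≤ a 0 * A + ∑ i ∈ range n, (a (i + 1) - a i) * A ^ (i + 1) := habs
        _ ≤ a 0 * A ^ n + ∑ i ∈ range n, (a (i + 1) - a i) * A ^ n :=
            add_le_add (mul_le_mul_of_nonneg_left
              (le_self_pow₀ hA1.le (Nat.succ_ne_zero m)) ha0.le) (Finset.sum_le_sum hb)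
        _ = a 0 * A ^ n + (a n - a 0) * A ^ n := by rw [← Finset.sum_mul, hdsum]
        _ = a n * A ^ n := by ring
    have hAn : 0 < A ^ n := pow_pos (lt_trans one_pos hA1) n
    have h2 : a n * A ^ n * 1 < a n * A ^ n * A :=
      mul_lt_mul_of_pos_left hA1 (mul_pos (hpos n le_rfl) hAn)
    have h3 : a n * A ^ (n + 1) = a n * A ^ n * A := by ring
    linarith
  -- A = 1 is impossible
  rcases lt_or_eq_of_le hAle with h | hA1
  · exact h
  exfalso
  set c : ℂ := (starRingEnd ℂ) r with hcdef
  have hrc : r * c = 1 := by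
    rw [hcdef, Complex.mul_conj, Complex.normSq_eq_abs, ← hAdef, hA1]
    norm_num
  have habsc : Complex.abs c = 1 := by rw [hcdef, Complex.abs_conj, ← hAdef, hA1]
  -- multiply the identity by c^(n+1)
  have hid2 : (a n : ℂ) = (a 0 : ℂ) * (r * c ^ (n + 1))
      + ∑ i ∈ range n, ((a (i + 1) : ℂ) - (a i : ℂ)) * (r ^ (i + 1) * c ^ (n + 1)) := by
    have h := congrArg (fun x => x * c ^ (n + 1)) hid
    simp only [add_mul, Finset.sum_mul] at h
    have hl : (a n : ℂ) * r ^ (n + 1) * c ^ (n + 1) = (a n : ℂ) := by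
      rw [mul_assoc, ← mul_pow, hrc, one_pow, mul_one]
    rw [hl] at h
    rw [h]
    congr 1
    · ring
    · exact Finset.sum_congr rfl fun i _ => by ring
  -- real parts
  have hre : (a n : ℝ) = a 0 * (r * c ^ (n + 1)).re
      + ∑ i ∈ range n, (a (i + 1) - a i) * (r ^ (i + 1) * c ^ (n + 1)).re := by
    have h := congrArg Complex.re hid2
    rw [Complex.add_re, Complex.re_sum] at h
    rw [Complex.ofReal_re] at h
    rw [h]
    congr 1
    · rw [Complex.re_ofReal_mul]
    · apply Finset.sum_congr rfl
      intro i _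
      have : ((a (i + 1) : ℂ) - (a i : ℂ)) = ((a (i + 1) - a i : ℝ) : ℂ) := by push_cast; ring
      rw [this, Complex.re_ofReal_mul]
  have habsz : ∀ j : ℕ, Complex.abs (r ^ j * c ^ (n + 1)) = 1 := by
    intro j
    rw [map_mul, map_pow, map_pow, ← hAdef, hA1, habsc, one_pow, one_pow, one_mul]
  have hrele : ∀ j : ℕ, (r ^ j * c ^ (n + 1)).re ≤ 1 := by
    intro j
    calc (r ^ j * c ^ (n + 1)).re ≤ Complex.abs (r ^ j * c ^ (n + 1)) := Complex.re_le_abs _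
      _ = 1 := habsz j
  -- extract that the last term has real part 1
  have hlast : (r ^ n * c ^ (n + 1)).re = 1 := by
    by_contra hne
    have hlt : (r ^ n * c ^ (n + 1)).re < 1 := lt_of_le_of_ne (hrele n) hne
    have hsum_lt : ∑ i ∈ range n, (a (i + 1) - a i) * (r ^ (i + 1) * c ^ (n + 1)).re
        < ∑ i ∈ range n, (a (i + 1) - a i) * 1 := by
      apply Finset.sum_lt_sum
      · intro i hi
        exact mul_le_mul_of_nonneg_left (hrele _)
          (sub_pos.mpr (hmono i (Finset.mem_range.mp hi))).le
      · refine ⟨m, Finset.self_mem_range_succ m, ?_⟩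
        have : m + 1 = n := rfl
        rw [this]
        exact mul_lt_mul_of_pos_left hlt (sub_pos.mpr (hmono m (by omega)))
    have h0le : a 0 * (r * c ^ (n + 1)).re ≤ a 0 * 1 := by
      have : (r * c ^ (n + 1)).re ≤ 1 := by
        have := hrele 1
        rwa [pow_one] at this
      exact mul_le_mul_of_nonneg_left this ha0.le
    have : (a n : ℝ) < a 0 * 1 + ∑ i ∈ range n, (a (i + 1) - a i) * 1 := by
      rw [hre]; exact add_lt_add_of_le_of_lt h0le hsum_lt
    simp only [mul_one] at this
    rw [hdsum] at this
    linarith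
  -- deduce r = 1
  have hz1 : r ^ n * c ^ (n + 1) = 1 := by
    have habs1 : Complex.abs (r ^ n * c ^ (n + 1)) = 1 := habsz n
    have hnsq : Complex.normSq (r ^ n * c ^ (n + 1)) = 1 := by
      rw [Complex.normSq_eq_abs, habs1, one_pow]
    set z := r ^ n * c ^ (n + 1)
    rw [Complex.normSq_apply, hlast] at hnsq
    have him : z.im = 0 := by nlinarith
    apply Complex.ext
    · rw [hlast]; rfl
    · rw [him]; rfl
  have hc1 : c = 1 := by
    have : r ^ n * c ^ (n + 1) = (r * c) ^ n * c := by ring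
    rw [this, hrc, one_pow, one_mul] at hz1
    exact hz1
  have hr1 : r = 1 := by
    have := congrArg (starRingEnd ℂ) hc1
    rw [hcdef, RingHom.map_one, Complex.conj_conj] at this
    exact this
  -- contradiction: the root equation at r = 1 gives a sum of positives equal to 0
  rw [hr1] at hS
  simp only [one_pow, mul_one] at hS
  have : (∑ i ∈ range n, a (i + 1)) = 0 := by
    have := congrArg Complex.re hS
    rw [Complex.re_sum] at this
    simpa using this
  have hposum : 0 < ∑ i ∈ range n, a (i + 1) := by
    apply Finset.sum_pos
    · intro i hi
      exact hpos (i + 1) (by have := Finset.mem_range.mp hi; omega)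
    · exact ⟨0, Finset.mem_range.mpr (by omega)⟩
  linarith

private lemma key (n : ℕ) (hn : 1 ≤ n) (a : ℕ → ℝ) (ha0 : 0 < a 0)
    (hmono : ∀ k, k < n → a k < a (k + 1)) (w : ℂ) (hw : 1 < Complex.abs w) :
    Complex.abs (∑ k ∈ Finset.Icc 1 n, (a k : ℂ) * w⁻¹ ^ k)
      < Complex.abs (∑ k ∈ Finset.Icc 1 n, (a k : ℂ) * w ^ k) := by
  have hpos : ∀ k, k ≤ n → 0 < a k := by
    intro k
    induction k with
    | zero => intro _; exact ha0
    | succ j ih => intro h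
                   exact lt_trans (ih (Nat.le_of_succ_le h)) (hmono j (Nat.lt_of_succ_le h))
  set P : Polynomial ℂ := ∑ k ∈ Finset.Icc 1 n, Polynomial.C (a k : ℂ) * Polynomial.X ^ k
    with hPdef
  have heval : ∀ v : ℂ, P.eval v = ∑ k ∈ Finset.Icc 1 n, (a k : ℂ) * v ^ k := by
    intro v
    rw [hPdef, Polynomial.eval_finset_sum]
    exact Finset.sum_congr rfl fun k _ => by
      rw [Polynomial.eval_mul, Polynomial.eval_C, Polynomial.eval_pow, Polynomial.eval_X]
  have hconj : ∀ v : ℂ, P.eval ((starRingEnd ℂ) v) = (starRingEnd ℂ) (P.eval v) := by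
    intro v
    rw [heval, heval, map_sum]
    exact Finset.sum_congr rfl fun k _ => by
      rw [map_mul, map_pow, Complex.conj_ofReal]
  have hcoeff : P.coeff n = (a n : ℂ) := by
    rw [hPdef, Polynomial.finset_sum_coeff]
    rw [Finset.sum_eq_single n]
    · simp
    · intro b _ hb
      simp [Polynomial.coeff_C_mul, Polynomial.coeff_X_pow, Ne.symm hb]
    · intro h
      exact absurd (Finset.mem_Icc.mpr ⟨hn, le_rfl⟩) h
  have han : (a n : ℂ) ≠ 0 := by
    exact_mod_cast (hpos n le_rfl).ne'
  have hP0 : P ≠ 0 := by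
    intro h
    rw [h, Polynomial.coeff_zero] at hcoeff
    exact han hcoeff.symm
  have hsplits : P.Splits := IsAlgClosed.splits P
  have hfact : P = Polynomial.C P.leadingCoeff
      * (P.roots.map fun r => Polynomial.X - Polynomial.C r).prod :=
    hsplits.eq_prod_roots
  have hlc : 0 < Complex.abs P.leadingCoeff := by
    rw [AbsoluteValue.pos_iff]
    exact Polynomial.leadingCoeff_ne_zero.mpr hP0
  have hevalabs : ∀ v : ℂ, Complex.abs (P.eval v)
      = Complex.abs P.leadingCoeff * (P.roots.map fun r => Complex.abs (v - r)).prod := by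
    intro v
    conv_lhs => rw [hfact]
    rw [Polynomial.eval_mul, Polynomial.eval_C, map_mul]
    congr 1
    rw [Polynomial.eval_multiset_prod, map_multiset_prod]
    rw [Multiset.map_map, Multiset.map_map]
    apply congrArg
    apply Multiset.map_congr rfl
    intro r _
    simp [Function.comp]
  have hroots_ne : P.roots ≠ 0 := by
    intro h
    have hdeg : n ≤ P.natDegree := Polynomial.le_natDegree_of_ne_zero (by rw [hcoeff]; exact han)
    have hcard : P.natDegree = Multiset.card P.roots := by
      have := hsplits.natDegree_eq_card_roots
      exact this
    rw [h] at hcard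
    simp at hcard
    omega
  have hroots_lt : ∀ r ∈ P.roots, Complex.abs r < 1 := by
    intro r hr
    have hroot : P.eval r = 0 := Polynomial.isRoot_of_mem_roots hr
    rw [heval] at hroot
    exact ek n hn a ha0 hmono r hroot
  -- assemble
  have hstep : (P.roots.map fun r => Complex.abs (w⁻¹ - r)).prod
      < (P.roots.map fun r => Complex.abs ((starRingEnd ℂ) w - r)).prod := by
    apply aux_prod_lt hroots_ne
    · intro r _; exact Complex.abs.nonneg _
    · intro r hr; exact factor_lt hw (hroots_lt r hr)
  calc Complex.abs (∑ k ∈ Finset.Icc 1 n, (a k : ℂ) * w⁻¹ ^ k)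
      = Complex.abs (P.eval w⁻¹) := by rw [heval]
    _ = Complex.abs P.leadingCoeff * (P.roots.map fun r => Complex.abs (w⁻¹ - r)).prod :=
        hevalabs w⁻¹
    _ < Complex.abs P.leadingCoeff
        * (P.roots.map fun r => Complex.abs ((starRingEnd ℂ) w - r)).prod :=
        mul_lt_mul_of_pos_left hstep hlc
    _ = Complex.abs (P.eval ((starRingEnd ℂ) w)) := (hevalabs _).symm
    _ = Complex.abs ((starRingEnd ℂ) (P.eval w)) := by rw [hconj]
    _ = Complex.abs (P.eval w) := Complex.abs_conj _
    _ = Complex.abs (∑ k ∈ Finset.Icc 1 n, (a k : ℂ) * w ^ k) := by rw [heval]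

/-- If `0 < a 0 < a 1 < ⋯ < a n` (with `n ≥ 1`), then the entire function
`B(z) = ∑_{k=1}^{n} a k * sin (k z)` (complex sine) has only real zeros. -/
theorem sin_sum_real_zeros (n : ℕ) (hn : 1 ≤ n) (a : ℕ → ℝ)
    (ha0 : 0 < a 0) (hmono : ∀ k, k < n → a k < a (k + 1)) :
    ∀ z : ℂ, ∑ k ∈ Finset.Icc 1 n, (a k : ℂ) * Complex.sin (k * z) = 0 → z.im = 0 := by
  intro z hz
  by_contra him
  obtain ⟨u, hudef⟩ : ∃ u : ℂ, u = Complex.exp (z * Complex.I) := ⟨_, rfl⟩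
  have hu0 : u ≠ 0 := hudef ▸ Complex.exp_ne_zero _
  have habs_u : Complex.abs u = Real.exp (-z.im) := by
    rw [hudef, Complex.abs_exp]
    congr 1
    simp [Complex.mul_re, Complex.I_re, Complex.I_im]
  have hsin : ∀ k : ℕ, Complex.sin ((k : ℂ) * z)
      = ((u⁻¹) ^ k - u ^ k) * Complex.I / 2 := by
    intro k
    have e1 : Complex.exp (-((k : ℂ) * z) * Complex.I) = (u⁻¹) ^ k := by
      rw [show -((k : ℂ) * z) * Complex.I = (k : ℂ) * (-(z * Complex.I)) by ring,
        Complex.exp_nat_mul, Complex.exp_neg, ← hudef]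
    have e2 : Complex.exp ((k : ℂ) * z * Complex.I) = u ^ k := by
      rw [show (k : ℂ) * z * Complex.I = (k : ℂ) * (z * Complex.I) by ring,
        Complex.exp_nat_mul, ← hudef]
    rw [Complex.sin, e1, e2]
  have hz' : ∑ k ∈ Finset.Icc 1 n, (a k : ℂ) * (u⁻¹) ^ k
      = ∑ k ∈ Finset.Icc 1 n, (a k : ℂ) * u ^ k := by
    have h1 : ∑ k ∈ Finset.Icc 1 n, (a k : ℂ) * Complex.sin ((k : ℂ) * z)
        = (∑ k ∈ Finset.Icc 1 n, (a k : ℂ) * (u⁻¹) ^ k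
            - ∑ k ∈ Finset.Icc 1 n, (a k : ℂ) * u ^ k) * (Complex.I / 2) := by
      rw [← Finset.sum_sub_distrib, Finset.sum_mul]
      apply Finset.sum_congr rfl
      intro k _
      rw [hsin k]
      ring
    rw [h1] at hz
    have hI2 : (Complex.I / 2 : ℂ) ≠ 0 := by
      simp [Complex.I_ne_zero]
    rcases mul_eq_zero.mp hz with h | h
    · exact sub_eq_zero.mp h
    · exact absurd h hI2
  rcases lt_trichotomy z.im 0 with hlt | heq | hgt
  · have hw : 1 < Complex.abs u := by
      rw [habs_u, Real.one_lt_exp_iff]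
      linarith
    have hk := key n hn a ha0 hmono u hw
    rw [hz'] at hk
    exact lt_irrefl _ hk
  · exact him heq
  · have hw : 1 < Complex.abs u⁻¹ := by
      rw [map_inv₀, habs_u, ← Real.exp_neg, neg_neg, Real.one_lt_exp_iff]
      exact hgt
    have hk := key n hn a ha0 hmono u⁻¹ hw
    rw [inv_inv, hz'] at hk
    exact lt_irrefl _ hk
end

section
/- Let m ≥ 1 be an integer, a ∈ ℝ, and t ∈ ℝ. Then 4^m · cosh(t/4) · (sinh²(t/m) + 1 − a²)^m = Σ_{j=0}^{m} b_{m,j} · (cosh(2jt/m + t/4) + cosh(2jt/m − t/4)), where b_{m,j} = (1/2) · 4^m · Σ_{k=j}^{m} C(m,k) (1 − a²)^{m−k} a_{k,j}, with a_{0,0} := 1 and, for k ≥ 1, a_{k,0} = (−1)^k 2^{−2k} C(2k,k), a_{k,k} = 2^{1−2k}, and a_{k,j} = (−1)^{k−j} 2^{1−2k} C(2k, k−j) for 0 < j < k. -/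
open Finset

lemma two_zpow_neg_mul_four (k : ℕ) : (2 : ℝ) ^ (-(2 * k : ℤ)) * 4 ^ k = 1 := by
  rw [show (4:ℝ) = 2^2 by norm_num, ← pow_mul, zpow_neg]
  rw [show ((2:ℝ)^(2*k : ℤ)) = (2:ℝ)^(2*k) by rw [← zpow_natCast]; norm_num]
  field_simp [mul_comm]

lemma two_zpow_one_sub_mul_four (k : ℕ) : (2 : ℝ) ^ ((1:ℤ) - 2 * k) * 4 ^ k = 2 := by
  have h := two_zpow_neg_mul_four k
  rw [show ((1:ℤ) - 2*k) = 1 + (-(2*k:ℤ)) by ring, zpow_add₀ (by norm_num : (2:ℝ) ≠ 0)]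
  rw [zpow_one, mul_assoc, h, mul_one]

/-- The coefficients `a_{k,j}` in the expansion of `sinh^{2k}` as a finite cosh-series,
with `a_{0,0} = 1`. -/
noncomputable def acoef (k j : ℕ) : ℝ :=
  if j = 0 then (-1 : ℝ) ^ k * (2 : ℝ) ^ (-(2 * k : ℤ)) * (Nat.choose (2 * k) k : ℝ)
  else (-1 : ℝ) ^ (k - j) * (2 : ℝ) ^ ((1 : ℤ) - 2 * k) * (Nat.choose (2 * k) (k - j) : ℝ)

lemma sinh_pow_key (k : ℕ) (x : ℝ) :
    Real.sinh x ^ (2 * k) = ∑ j ∈ Finset.range (k + 1), acoef k j * Real.cosh (2 * j * x) := by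
  have h4 : (4:ℝ) ^ k ≠ 0 := by positivity
  apply mul_right_cancel₀ h4
  set f : ℕ → ℝ := fun i =>
    (-1 : ℝ) ^ i * (Nat.choose (2 * k) i : ℝ) * Real.exp ((2 * (i:ℝ) - 2 * k) * x) with hf
  have step1 : Real.sinh x ^ (2 * k) * 4 ^ k = ∑ i ∈ range (2 * k + 1), f i := by
    have hsinh : Real.sinh x = (Real.exp x - Real.exp (-x)) / 2 := Real.sinh_eq x
    rw [hsinh, div_pow, show ((2:ℝ) ^ (2*k)) = 4 ^ k by rw [pow_mul]; norm_num,
      div_mul_cancel₀ _ h4, sub_pow]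
    refine Finset.sum_congr rfl fun i hi => ?_
    rw [Finset.mem_range] at hi
    have hik : i ≤ 2 * k := by omega
    have hsign : (-1 : ℝ) ^ (i + 2 * k) = (-1) ^ i := by
      rw [pow_add, pow_mul, neg_one_sq, one_pow, mul_one]
    have hcast : ((2 * k - i : ℕ) : ℝ) = 2 * (k:ℝ) - i := by
      push_cast [Nat.cast_sub hik]; ring
    have hprod : Real.exp ((i:ℝ) * x) * Real.exp (((2 * k - i : ℕ):ℝ) * -x)
        = Real.exp ((2 * (i:ℝ) - 2 * k) * x) := by
      rw [← Real.exp_add, hcast]; congr 1; ring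
    rw [hsign, ← Real.exp_nat_mul, ← Real.exp_nat_mul]
    simp only [hf]
    rw [← hprod]
    ring
  have step2 :
      (∑ j ∈ range (k + 1), acoef k j * Real.cosh (2 * j * x)) * 4 ^ k
        = ∑ j ∈ range (k + 1), acoef k j * 4 ^ k * Real.cosh (2 * j * x) := by
    rw [Finset.sum_mul]; refine Finset.sum_congr rfl fun j _ => by ring
  rw [step1, step2]
  set g : ℕ → ℝ := fun j => acoef k j * 4 ^ k * Real.cosh (2 * j * x) with hg
  have h1 : ∑ i ∈ range (2 * k + 1), f i
      = ∑ i ∈ range k, f i + ∑ i ∈ Ico k (2 * k + 1), f i := by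
    rw [range_eq_Ico, ← Finset.sum_Ico_consecutive f (Nat.zero_le k) (by omega : k ≤ 2*k+1),
      ← range_eq_Ico]
  have h2 : ∑ i ∈ Ico k (2 * k + 1), f i = ∑ j ∈ range (k + 1), f (k + j) := by
    rw [Finset.sum_Ico_eq_sum_range, show 2*k+1-k = k+1 from by omega]
  have h3 : ∑ i ∈ range k, f i = ∑ j ∈ range k, f (k - 1 - j) :=
    (Finset.sum_range_reflect f k).symm
  rw [h1, h2, h3, Finset.sum_range_succ' (fun j => f (k + j)) k,
    Finset.sum_range_succ' g k]
  have h0 : f (k + 0) = g 0 := by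
    simp only [hf, hg, Nat.add_zero, Nat.cast_zero]
    rw [show acoef k 0 = (-1:ℝ)^k * (2:ℝ)^(-(2*k:ℤ)) * (Nat.choose (2*k) k : ℝ) from if_pos rfl]
    rw [show (2*(0:ℝ)*x) = 0 by ring, Real.cosh_zero,
      show ((2*(k:ℝ) - 2*k)*x) = 0 by ring, Real.exp_zero]
    linear_combination (-((-1:ℝ)^k * ((Nat.choose (2*k) k : ℕ) : ℝ))) * two_zpow_neg_mul_four k
  have hterm : ∀ j ∈ range k, f (k + (j + 1)) + f (k - 1 - j) = g (j + 1) := by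
    intro j hj
    rw [Finset.mem_range] at hj
    have h2' : k + (j + 1) ≤ 2 * k := by omega
    set C : ℝ := (Nat.choose (2 * k) (k - (j + 1)) : ℝ) with hC
    have hchoose : (Nat.choose (2 * k) (k + (j + 1)) : ℝ) = C := by
      rw [hC, ← Nat.choose_symm h2']
      congr 2
      omega
    have hsign : (-1 : ℝ) ^ (k + (j + 1)) = (-1) ^ (k - (j + 1)) := by
      rw [show k + (j + 1) = (k - (j + 1)) + 2 * (j + 1) by omega, pow_add, pow_mul,
        neg_one_sq, one_pow, mul_one]
    have hgval : g (j + 1) = (-1:ℝ)^(k - (j+1)) * C * 2 * Real.cosh (2 * ((j:ℝ)+1) * x) := by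
      simp only [hg]
      rw [show acoef k (j+1) = (-1:ℝ)^(k-(j+1)) * (2:ℝ)^((1:ℤ) - 2*k)
          * (Nat.choose (2*k) (k-(j+1)) : ℝ) from if_neg (Nat.succ_ne_zero j)]
      rw [show ((j+1 : ℕ) : ℝ) = (j:ℝ) + 1 by push_cast; ring]
      linear_combination ((-1:ℝ)^(k-(j+1)) * C * Real.cosh (2 * ((j:ℝ)+1) * x))
        * two_zpow_one_sub_mul_four k
    have hf1 : f (k + (j + 1)) = (-1:ℝ)^(k-(j+1)) * C * Real.exp (2 * ((j:ℝ)+1) * x) := by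
      simp only [hf]
      rw [hchoose, hsign, show ((k + (j+1) : ℕ) : ℝ) = (k:ℝ) + ((j:ℝ)+1) by push_cast; ring,
        show (2 * ((k:ℝ) + ((j:ℝ)+1)) - 2*k) * x = 2 * ((j:ℝ)+1) * x by ring]
    have hf2 : f (k - 1 - j) = (-1:ℝ)^(k-(j+1)) * C * Real.exp (-(2 * ((j:ℝ)+1) * x)) := by
      simp only [hf]
      rw [show k - 1 - j = k - (j+1) by omega,
        show ((k - (j+1) : ℕ) : ℝ) = (k:ℝ) - ((j:ℝ)+1) by
          rw [Nat.cast_sub (by omega)]; push_cast; ring,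
        show (2 * ((k:ℝ) - ((j:ℝ)+1)) - 2*k) * x = -(2 * ((j:ℝ)+1) * x) by ring]
    rw [hf1, hf2, hgval, Real.cosh_eq]
    ring
  have hsum : ∑ j ∈ range k, f (k + (j + 1)) + ∑ j ∈ range k, f (k - 1 - j)
      = ∑ j ∈ range k, g (j + 1) := by
    rw [← Finset.sum_add_distrib]
    exact Finset.sum_congr rfl hterm
  rw [h0]
  linarith [hsum]

/-- The coefficients `b_{m,j} = (1/2)·4^m·∑_{k=j}^{m} C(m,k)(1−a²)^{m−k} a_{k,j}`. -/
noncomputable def bcoef (m : ℕ) (a : ℝ) (j : ℕ) : ℝ :=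
  (1 / 2) * (4 : ℝ) ^ m *
    ∑ k ∈ Finset.Icc j m, (Nat.choose m k : ℝ) * (1 - a ^ 2) ^ (m - k) * acoef k j

/-- **Lemma 8 of the paper.** For `m ≥ 1`, `a t : ℝ`,
`4^m cosh(t/4) (sinh²(t/m) + 1 − a²)^m
  = ∑_{j=0}^{m} b_{m,j} (cosh(2jt/m + t/4) + cosh(2jt/m − t/4))`. -/
theorem cosh_expansion_h (m : ℕ) (hm : 1 ≤ m) (a t : ℝ) :
    (4 : ℝ) ^ m * Real.cosh (t / 4) * (Real.sinh (t / m) ^ 2 + 1 - a ^ 2) ^ m =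
      ∑ j ∈ Finset.range (m + 1),
        bcoef m a j *
          (Real.cosh (2 * j * t / m + t / 4) + Real.cosh (2 * j * t / m - t / 4)) := by
  set x : ℝ := t / m with hx
  set c : ℝ := 1 - a ^ 2 with hc
  have hLHS : (4 : ℝ) ^ m * Real.cosh (t / 4) * (Real.sinh x ^ 2 + 1 - a ^ 2) ^ m
      = ∑ k ∈ range (m + 1), ∑ j ∈ range (k + 1),
          (4:ℝ)^m * Real.cosh (t/4) * ((Nat.choose m k : ℝ) * c^(m-k) * acoef k j
            * Real.cosh (2 * j * x)) := by
    rw [show Real.sinh x ^ 2 + 1 - a ^ 2 = Real.sinh x ^ 2 + c by rw [hc]; ring, add_pow,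
      Finset.mul_sum]
    refine Finset.sum_congr rfl fun k _ => ?_
    rw [← pow_mul, sinh_pow_key k x, Finset.sum_mul, Finset.sum_mul, Finset.mul_sum]
    exact Finset.sum_congr rfl fun j _ => by ring
  rw [hLHS, Finset.sum_comm' (t' := range (m+1)) (s' := fun j => Finset.Icc j m)
    (by intro k j; simp only [Finset.mem_range, Finset.mem_Icc]; omega)]
  refine Finset.sum_congr rfl fun j hj => ?_
  have harg : 2 * (j:ℝ) * t / m = 2 * j * x := by rw [hx]; ring
  have h2c : Real.cosh (2 * j * t / m + t / 4) + Real.cosh (2 * j * t / m - t / 4)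
      = 2 * Real.cosh (2 * j * x) * Real.cosh (t / 4) := by
    rw [Real.cosh_add, Real.cosh_sub, harg]; ring
  rw [h2c, bcoef, ← hc, Finset.mul_sum, Finset.sum_mul]
  exact Finset.sum_congr rfl fun k _ => by ring
end
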